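/- Let y_i = effective_load(i)/D where effective_load(i) = min over incarnations j and bin types t of w_t * max_d (a_{ijd}/b_{td}). Then y is a feasible dual solution: for every compatible set C (a set of items with chosen incarnations j'(i) fitting in one bin of type t, i.e., sum_{i in C} a_{i j'(i) d} <= b_{td} for all d in [D]), we have sum_{i in C} y_i <= w_t. -/

import Mathlib

open Finset

/-- The effective load of item `i`: the minimum over incarnations `j` and bin types `t` of
`w t * max_d (a i j d / b t d)`. Here there are `m+1` incarnations, `T+1` bin types and
`D+1` dimensions. -/
noncomputable def effLoad (D m T : ℕ) {ι : Type*}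
    (a : ι → Fin (m + 1) → Fin (D + 1) → ℝ) (b : Fin (T + 1) → Fin (D + 1) → ℝ)
    (w : Fin (T + 1) → ℝ) (i : ι) : ℝ :=
  Finset.univ.inf' Finset.univ_nonempty fun jt : Fin (m + 1) × Fin (T + 1) =>
    w jt.2 * (Finset.univ.sup' Finset.univ_nonempty fun d : Fin (D + 1) =>
      a i jt.1 d / b jt.2 d)

/-- Dual feasibility in the proof of Lemma 1: with `y i = effLoad i / D`, for every
compatible set `C` (fitting in one bin of type `t` via incarnations `j'`),
`∑_{i ∈ C} y i ≤ w t`. -/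
theorem stmt6 (D m T : ℕ) {ι : Type*} [DecidableEq ι]
    (a : ι → Fin (m + 1) → Fin (D + 1) → ℝ) (b : Fin (T + 1) → Fin (D + 1) → ℝ)
    (w : Fin (T + 1) → ℝ)
    (ha : ∀ i j d, 0 < a i j d) (hb : ∀ t d, 0 < b t d) (hw : ∀ t, 0 < w t)
    (C : Finset ι) (t : Fin (T + 1)) (j' : ι → Fin (m + 1))
    (hcompat : ∀ d, ∑ i ∈ C, a i (j' i) d ≤ b t d) :
    ∑ i ∈ C, effLoad D m T a b w i / ((D : ℝ) + 1) ≤ w t := by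
  have hD : (0:ℝ) < (D:ℝ) + 1 := by positivity
  have key : ∀ i ∈ C, effLoad D m T a b w i ≤ w t * ∑ d, a i (j' i) d / b t d := by
    intro i _
    have h1 : effLoad D m T a b w i ≤
        w t * (Finset.univ.sup' Finset.univ_nonempty fun d : Fin (D + 1) =>
          a i (j' i) d / b t d) :=
      Finset.inf'_le _ (Finset.mem_univ (j' i, t))
    refine h1.trans ?_
    refine mul_le_mul_of_nonneg_left ?_ (hw t).le
    refine Finset.sup'_le _ _ fun d _ => ?_
    refine Finset.single_le_sum (f := fun d => a i (j' i) d / b t d)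
      (fun d' _ => div_nonneg (ha _ _ _).le (hb _ _).le) (Finset.mem_univ d)
  have h2 : ∑ i ∈ C, effLoad D m T a b w i ≤ w t * ((D:ℝ) + 1) := by
    calc ∑ i ∈ C, effLoad D m T a b w i
        ≤ ∑ i ∈ C, w t * ∑ d, a i (j' i) d / b t d := Finset.sum_le_sum key
      _ = w t * ∑ d : Fin (D+1), (∑ i ∈ C, a i (j' i) d) / b t d := by
          rw [← Finset.mul_sum, Finset.sum_comm]
          simp [Finset.sum_div]
      _ ≤ w t * ∑ d : Fin (D+1), (1:ℝ) := by
          refine mul_le_mul_of_nonneg_left ?_ (hw t).le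
          refine Finset.sum_le_sum fun d _ => ?_
          rw [div_le_one (hb t d)]
          exact hcompat d
      _ = w t * ((D:ℝ) + 1) := by simp
  calc ∑ i ∈ C, effLoad D m T a b w i / ((D:ℝ) + 1)
      = (∑ i ∈ C, effLoad D m T a b w i) / ((D:ℝ) + 1) := by rw [Finset.sum_div]
    _ ≤ w t * ((D:ℝ) + 1) / ((D:ℝ) + 1) := by
        gcongr
    _ = w t := by field_simp
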